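/- Let Λ: ℝ → (0,1) be increasing and W a family of capacities on (Ω,𝓕), and set w̄(A) = sup_{w ∈ W} w(A). Then w̄ is a capacity and for every random variable X, sup_{w ∈ W} ΛVaR^w(X) = ΛVaR^{w̄}(X). -/

import Mathlib

open Set

/-- Lambda Value-at-Risk of `X` with respect to a capacity `w` and function `Λ`:
`inf {x ∈ ℝ : w(X > x) ≤ Λ(x)}`, valued in the extended reals (`inf ∅ = ⊤`). -/
noncomputable def LVaR {Ω : Type*} (w : Set Ω → ℝ) (Λ : ℝ → ℝ) (X : Ω → ℝ) : EReal :=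
  sInf ((fun x : ℝ => (x : EReal)) '' {x : ℝ | w {ω | x < X ω} ≤ Λ x})

/-- For `Λ : ℝ → (0,1)` increasing and a nonempty family `W` of capacities,
`w̄ = sup_{w ∈ W} w` is a capacity, and `sup_{w ∈ W} ΛVaR^w(X) = ΛVaR^{w̄}(X)`. -/
theorem stmt_3 {Ω : Type*} (W : Set (Set Ω → ℝ)) (hW : W.Nonempty)
    (hcap : ∀ w ∈ W, (∀ A B : Set Ω, A ⊆ B → w A ≤ w B) ∧
      w (∅ : Set Ω) = 0 ∧ w (univ : Set Ω) = 1)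
    (Λ : ℝ → ℝ) (hΛ : ∀ x, Λ x ∈ Ioo (0 : ℝ) 1) (hΛ_mono : Monotone Λ) :
    let wbar : Set Ω → ℝ := fun A => ⨆ w : W, (w : Set Ω → ℝ) A
    (∀ A B : Set Ω, A ⊆ B → wbar A ≤ wbar B) ∧
    wbar (∅ : Set Ω) = 0 ∧ wbar (univ : Set Ω) = 1 ∧
    ∀ X : Ω → ℝ, (⨆ w : W, LVaR (w : Set Ω → ℝ) Λ X) = LVaR wbar Λ X := by
  haveI : Nonempty W := hW.to_subtype
  intro wbar
  have hb : ∀ A : Set Ω, ∀ w : W, (w : Set Ω → ℝ) A ≤ 1 := by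
    intro A w
    obtain ⟨hm, h0, h1⟩ := hcap w w.2
    calc (w : Set Ω → ℝ) A ≤ (w : Set Ω → ℝ) univ := hm A univ (subset_univ A)
      _ = 1 := h1
  have hbdd : ∀ A : Set Ω, BddAbove (Set.range fun w : W => (w : Set Ω → ℝ) A) := by
    intro A
    exact ⟨1, by rintro x ⟨w, rfl⟩; exact hb A w⟩
  have hle : ∀ (w : W) (A : Set Ω), (w : Set Ω → ℝ) A ≤ wbar A :=
    fun w A => le_ciSup (hbdd A) w
  have hsle : ∀ (A : Set Ω) (c : ℝ), (∀ w : W, (w : Set Ω → ℝ) A ≤ c) → wbar A ≤ c :=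
    fun A c h => ciSup_le h
  have hmono : ∀ A B : Set Ω, A ⊆ B → wbar A ≤ wbar B := by
    intro A B hAB
    exact ciSup_le fun w => le_trans ((hcap w w.2).1 A B hAB) (hle w B)
  refine ⟨hmono, ?_, ?_, ?_⟩
  · have h : (fun w : W => (w : Set Ω → ℝ) (∅ : Set Ω)) = fun _ => (0 : ℝ) :=
      funext fun w => (hcap w w.2).2.1
    show (⨆ w : W, (w : Set Ω → ℝ) (∅ : Set Ω)) = 0
    rw [h]; exact ciSup_const
  · have h : (fun w : W => (w : Set Ω → ℝ) (univ : Set Ω)) = fun _ => (1 : ℝ) :=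
      funext fun w => (hcap w w.2).2.2
    show (⨆ w : W, (w : Set Ω → ℝ) (univ : Set Ω)) = 1
    rw [h]; exact ciSup_const
  · intro X
    -- upper set property
    have hup : ∀ (w : Set Ω → ℝ), (∀ A B : Set Ω, A ⊆ B → w A ≤ w B) →
        ∀ x y : ℝ, x ≤ y → w {ω | x < X ω} ≤ Λ x → w {ω | y < X ω} ≤ Λ y := by
      intro w hm x y hxy hx
      have hsub : {ω | y < X ω} ⊆ {ω | x < X ω} := fun ω h => lt_of_le_of_lt hxy h
      exact le_trans (hm _ _ hsub) (le_trans hx (hΛ_mono hxy))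
    apply le_antisymm
    · apply iSup_le
      intro w
      apply sInf_le_sInf
      apply image_mono
      intro x hx
      exact le_trans (hle w _) hx
    · by_contra h
      push_neg at h
      obtain ⟨x, hx1, hx2⟩ := EReal.exists_between_coe_real h
      have hxmem : ∀ w : W, (w : Set Ω → ℝ) {ω | x < X ω} ≤ Λ x := by
        intro w
        have hw : LVaR (w : Set Ω → ℝ) Λ X < (x : EReal) :=
          lt_of_le_of_lt (le_iSup (fun w : W => LVaR (w : Set Ω → ℝ) Λ X) w) hx1
        rw [LVaR, sInf_lt_iff] at hw
        obtain ⟨b, hb', hbx⟩ := hw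
        obtain ⟨y, hy, rfl⟩ := hb'
        have hyx : y ≤ x := le_of_lt (EReal.coe_lt_coe_iff.mp hbx)
        exact hup (w : Set Ω → ℝ) (hcap w w.2).1 y x hyx hy
      have : wbar {ω | x < X ω} ≤ Λ x := hsle _ _ hxmem
      have : LVaR wbar Λ X ≤ (x : EReal) := sInf_le ⟨x, this, rfl⟩
      exact absurd (lt_of_le_of_lt this hx2) (lt_irrefl _)
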